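/- Let n ≥ 1, let α, β be partitions of n with m = l(β) and β_m = 1 (i.e., β has a part equal to 1). Then ζ^α_β = Σ_{i : α_i > α_{i+1}, 1 ≤ i ≤ l(α)} ζ^{α − ε_i}_{β − ε_m} (the branching theorem for symmetric group characters). -/

import Mathlib

open Finsupp
open scoped Classical

/-- The row index of `k` in the standard tabloid of shape `α`: the least `i` such that
`k < α 0 + ⋯ + α i`. -/
noncomputable def rowIdx (α : ℕ →₀ ℤ) (k : ℕ) : ℕ := sInf {i | (k : ℤ) < ∑ j ∈ Finset.range (i + 1), α j}

/-- The Young subgroup of `S_n` associated to `α`: the stabilizer of the standard tabloid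
whose rows are the consecutive blocks of `{0, …, n-1}` of sizes `α 0, α 1, …`. -/
def youngSubgroup (n : ℕ) (α : ℕ →₀ ℤ) : Subgroup (Equiv.Perm (Fin n)) where
  carrier := {σ | ∀ k : Fin n, rowIdx α (σ k) = rowIdx α k}
  one_mem' := fun _ => rfl
  mul_mem' := by
    intro a b ha hb k
    simpa [Equiv.Perm.mul_apply] using (ha (b k)).trans (hb k)
  inv_mem' := by
    intro a ha k
    have := ha (a⁻¹ k)
    rw [show a (a⁻¹ k) = k from by simp] at this
    exact this.symm

/-- The value at `g` of the permutation character of `G` acting on the cosets of `H`: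
the number of fixed cosets.  This is the value of the character induced from the
trivial character of `H`. -/
noncomputable def permCharValue {n : ℕ} (H : Subgroup (Equiv.Perm (Fin n)))
    (g : Equiv.Perm (Fin n)) : ℤ :=
  Nat.card {x : Equiv.Perm (Fin n) ⧸ H // g • x = x}

/-- `ξ^α`, as a function on `S_n`: the permutation character induced from the trivial
character of the Young subgroup `S_α` when `α` is nonnegative with `|α| = n`, and `0`
otherwise. -/
noncomputable def xi (n : ℕ) (α : ℕ →₀ ℤ) (g : Equiv.Perm (Fin n)) : ℤ :=
  if (∀ i, 0 ≤ α i) ∧ (α.sum fun _ v => v) = (n : ℤ) then permCharValue (youngSubgroup n α) g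
  else 0

/-- An `α`-tabloid: a sequence of pairwise disjoint subsets of `{0,…,n-1}` with
`|t i| = α i` for every `i`. -/
def IsTabloid (n : ℕ) (α : ℕ →₀ ℤ) (t : ℕ → Finset (Fin n)) : Prop :=
  (∀ i j, i ≠ j → Disjoint (t i) (t j)) ∧ ∀ i, ((t i).card : ℤ) = α i

/-- The multiset of (nonzero) parts of a finitely supported sequence. -/
def partsOf (β : ℕ →₀ ℕ) : Multiset ℕ := β.support.val.map β

/-- `σ` has cycle type `β` (with `1`s in `β` recording fixed points). -/
def HasCycleType {n : ℕ} (σ : Equiv.Perm (Fin n)) (β : ℕ →₀ ℕ) : Prop :=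
  (β.sum fun _ v => v) = n ∧ σ.cycleType = Multiset.filter (fun k => 2 ≤ k) (partsOf β)

/-- A nonnegative sequence regarded as an integer sequence. -/
noncomputable def natToZ (β : ℕ →₀ ℕ) : ℕ →₀ ℤ := Finsupp.mapRange Int.ofNat rfl β

/-- The virtual character `χ^α = ∑_{σ ∈ S_l} sgn σ · ξ^{α + σ - id_l}` (0-indexed,
the sequence `α + σ - id_l` has `i`-th entry `α i + σ i - i`). -/
noncomputable def chi (n l : ℕ) (α : ℕ →₀ ℤ) (g : Equiv.Perm (Fin n)) : ℤ :=
  ∑ σ : Equiv.Perm (Fin l),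
    (Equiv.Perm.sign σ : ℤ) *
      xi n (α + ∑ i : Fin l, Finsupp.single (i : ℕ) (((σ i : ℕ) : ℤ) - (i : ℕ))) g

/-- `ζ^α`, the irreducible character of `S_n` corresponding to the partition `α` of `n`,
given by the determinantal formula `ζ^α = χ^α` (with `l = n ≥ l(α)`). -/
noncomputable def zeta (n : ℕ) (α : ℕ →₀ ℕ) (g : Equiv.Perm (Fin n)) : ℤ :=
  chi n n (natToZ α) g

/-- `α` is a partition of `n`: weakly decreasing with `|α| = n`. -/
def IsPartitionOf (α : ℕ →₀ ℕ) (n : ℕ) : Prop :=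
  (∀ i, α (i + 1) ≤ α i) ∧ (α.sum fun _ v => v) = n

section Util

lemma sum_single_fin_apply (l : ℕ) (f : Fin l → ℤ) (j : ℕ) :
    (∑ i : Fin l, Finsupp.single (i : ℕ) (f i)) j
      = if h : j < l then f ⟨j, h⟩ else 0 := by
  rw [Finsupp.finset_sum_apply]
  by_cases h : j < l
  · rw [dif_pos h, Finset.sum_eq_single (⟨j, h⟩ : Fin l)]
    · simp [Finsupp.single_apply]
    · intro b _ hb
      rw [Finsupp.single_apply, if_neg]
      intro hc; exact hb (Fin.ext hc)
    · simp
  · rw [dif_neg h]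
    apply Finset.sum_eq_zero
    intro i _
    rw [Finsupp.single_apply, if_neg]
    intro hc; exact h (hc ▸ i.isLt)

lemma fsum_add (μ ν : ℕ →₀ ℤ) :
    ((μ + ν).sum fun _ v => v) = (μ.sum fun _ v => v) + (ν.sum fun _ v => v) :=
  Finsupp.sum_add_index' (fun _ => rfl) (fun _ _ _ => rfl)

lemma fsum_sub (μ ν : ℕ →₀ ℤ) :
    ((μ - ν).sum fun _ v => v) = (μ.sum fun _ v => v) - (ν.sum fun _ v => v) :=
  Finsupp.sum_sub_index (fun _ _ _ => rfl)

lemma fsum_single (a : ℕ) (b : ℤ) : ((Finsupp.single a b).sum fun _ v => v) = b :=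
  Finsupp.sum_single_index rfl

lemma natToZ_apply (α : ℕ →₀ ℕ) (j : ℕ) : natToZ α j = ((α j : ℕ) : ℤ) := rfl

lemma fsum_natToZ (α : ℕ →₀ ℕ) :
    ((natToZ α).sum fun _ v => v) = ((α.sum fun _ v => v : ℕ) : ℤ) := by
  unfold natToZ
  rw [Finsupp.sum_mapRange_index (fun _ => rfl), Finsupp.sum, Finsupp.sum, Nat.cast_sum]
  rfl

lemma natToZ_sub (α : ℕ →₀ ℕ) (i : ℕ) (h : 1 ≤ α i) :
    natToZ (α - Finsupp.single i 1) = natToZ α - Finsupp.single i 1 := by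
  ext j
  rw [Finsupp.sub_apply, natToZ_apply, natToZ_apply, Finsupp.tsub_apply]
  by_cases hj : j = i
  · subst hj
    rw [Finsupp.single_apply, if_pos rfl, Finsupp.single_apply, if_pos rfl]
    omega
  · rw [Finsupp.single_apply, if_neg (fun hc => hj hc.symm),
      Finsupp.single_apply, if_neg (fun hc => hj hc.symm)]
    omega

end Util

section RowIdx

/-- Partial sums of a finitely supported integer sequence. -/
def PP (γ : ℕ →₀ ℤ) (i : ℕ) : ℤ := ∑ j ∈ Finset.range i, γ j

lemma rowIdx_def (γ : ℕ →₀ ℤ) (k : ℕ) :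
    rowIdx γ k = sInf {i | (k : ℤ) < PP γ (i + 1)} := rfl

lemma PP_succ (γ : ℕ →₀ ℤ) (i : ℕ) : PP γ (i + 1) = PP γ i + γ i :=
  Finset.sum_range_succ _ _

lemma PP_mono (γ : ℕ →₀ ℤ) (hpos : ∀ i, 0 ≤ γ i) : Monotone (PP γ) := by
  intro a b hab
  exact Finset.sum_le_sum_of_subset_of_nonneg (Finset.range_subset_range.2 hab)
    (fun i _ _ => hpos i)

lemma PP_sum_of_subset (γ : ℕ →₀ ℤ) {m : ℕ} (h : γ.support ⊆ Finset.range m) :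
    PP γ m = γ.sum fun _ v => v := by
  rw [Finsupp.sum]
  exact (Finset.sum_subset h (fun x _ hx => Finsupp.notMem_support_iff.1 hx)).symm

lemma exists_bound (γ : ℕ →₀ ℤ) : ∃ m, γ.support ⊆ Finset.range m := by
  refine ⟨γ.support.sup id + 1, fun j hj => Finset.mem_range.2 ?_⟩
  have := Finset.le_sup (f := id) hj
  simp only [id] at this
  omega

lemma PP_le (γ : ℕ →₀ ℤ) (hpos : ∀ i, 0 ≤ γ i) {n : ℕ}
    (hsum : (γ.sum fun _ v => v) = (n : ℤ)) (i : ℕ) : PP γ i ≤ (n : ℤ) := by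
  obtain ⟨m, hm⟩ := exists_bound γ
  calc PP γ i ≤ PP γ (max i m) := PP_mono γ hpos (le_max_left _ _)
    _ = (n : ℤ) := by
        rw [PP_sum_of_subset γ (hm.trans (Finset.range_subset_range.2 (le_max_right _ _))), hsum]

lemma PP_nonneg (γ : ℕ →₀ ℤ) (hpos : ∀ i, 0 ≤ γ i) (i : ℕ) : 0 ≤ PP γ i :=
  Finset.sum_nonneg (fun j _ => hpos j)

lemma rowIdx_eq_iff (γ : ℕ →₀ ℤ) (hpos : ∀ i, 0 ≤ γ i) {n : ℕ}
    (hsum : (γ.sum fun _ v => v) = (n : ℤ)) {k : ℕ} (hk : (k : ℤ) < n) (i : ℕ) :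
    rowIdx γ k = i ↔ PP γ i ≤ (k : ℤ) ∧ (k : ℤ) < PP γ (i + 1) := by
  obtain ⟨m, hm⟩ := exists_bound γ
  have hmem : m ∈ {i | (k : ℤ) < PP γ (i + 1)} := by
    have h1 : PP γ m = (n : ℤ) := by rw [PP_sum_of_subset γ hm, hsum]
    have h2 : PP γ m ≤ PP γ (m + 1) := PP_mono γ hpos (Nat.le_succ m)
    simp only [Set.mem_setOf_eq]
    omega
  have hne : Set.Nonempty {i | (k : ℤ) < PP γ (i + 1)} := ⟨m, hmem⟩
  rw [rowIdx_def]
  constructor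
  · rintro rfl
    refine ⟨?_, Nat.sInf_mem hne⟩
    rcases Nat.eq_zero_or_eq_succ_pred (sInf {i | (k : ℤ) < PP γ (i + 1)}) with h0 | hsucc
    · rw [h0]
      show PP γ 0 ≤ (k : ℤ)
      simp [PP]
    · set r := sInf {i | (k : ℤ) < PP γ (i + 1)} with hr
      have hlt : r - 1 < r := by omega
      have : r - 1 ∉ {i | (k : ℤ) < PP γ (i + 1)} := Nat.notMem_of_lt_sInf hlt
      simp only [Set.mem_setOf_eq, not_lt] at this
      have : PP γ (r - 1 + 1) ≤ (k : ℤ) := this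
      rwa [show r - 1 + 1 = r by omega] at this
  · rintro ⟨h1, h2⟩
    refine le_antisymm (Nat.sInf_le h2) ?_
    by_contra hcon
    push_neg at hcon
    have hmem2 := Nat.sInf_mem hne
    simp only [Set.mem_setOf_eq] at hmem2
    have : PP γ (sInf {i | (k : ℤ) < PP γ (i + 1)} + 1) ≤ PP γ i := PP_mono γ hpos (by omega)
    omega

lemma row_card (γ : ℕ →₀ ℤ) (hpos : ∀ i, 0 ≤ γ i) {n : ℕ}
    (hsum : (γ.sum fun _ v => v) = (n : ℤ)) (i : ℕ) :
    (((Finset.univ.filter (fun k : Fin n => rowIdx γ (k : ℕ) = i)).card : ℤ)) = γ i := by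
  have hb : PP γ (i + 1) = PP γ i + γ i := PP_succ γ i
  have ha0 : 0 ≤ PP γ i := PP_nonneg γ hpos i
  have hab : PP γ i ≤ PP γ (i + 1) := PP_mono γ hpos (Nat.le_succ i)
  have hbn : PP γ (i + 1) ≤ (n : ℤ) := PP_le γ hpos hsum (i + 1)
  have hcard : (Finset.univ.filter (fun k : Fin n => rowIdx γ (k : ℕ) = i)).card
      = (Finset.Ico (PP γ i).toNat (PP γ (i + 1)).toNat).card := by
    refine Finset.card_nbij (fun k => (k : ℕ)) ?_ ?_ ?_
    · intro k hk
      rw [Finset.mem_coe, Finset.mem_filter] at hk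
      have hkn : ((k : ℕ) : ℤ) < (n : ℤ) := by exact_mod_cast k.isLt
      have := (rowIdx_eq_iff γ hpos hsum hkn i).1 hk.2
      rw [Finset.mem_coe, Finset.mem_Ico]
      exact ⟨Int.toNat_le.2 this.1, Int.lt_toNat.2 this.2⟩
    · intro a _ b _ hab'
      exact Fin.ext hab'
    · intro x hx
      rw [Finset.coe_Ico, Set.mem_Ico] at hx
      have hxb : (x : ℤ) < PP γ (i + 1) := Int.lt_toNat.1 hx.2
      have hxn : x < n := by
        have : (x : ℤ) < (n : ℤ) := lt_of_lt_of_le hxb hbn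
        exact_mod_cast this
      have hxa : PP γ i ≤ (x : ℤ) := by
        have := hx.1
        have h2 : PP γ i ≤ ((PP γ i).toNat : ℤ) := by
          rw [Int.toNat_of_nonneg ha0]
        omega
      refine ⟨⟨x, hxn⟩, ?_, rfl⟩
      simp only [Finset.coe_filter, Set.mem_setOf_eq, Finset.mem_univ, true_and]
      exact (rowIdx_eq_iff γ hpos hsum (by exact_mod_cast hxn) i).2 ⟨hxa, hxb⟩
  rw [hcard, Nat.card_Ico]
  have h1 : (PP γ i).toNat ≤ (PP γ (i + 1)).toNat := Int.toNat_le_toNat hab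
  rw [Nat.cast_sub h1, Int.toNat_of_nonneg ha0, Int.toNat_of_nonneg (le_trans ha0 hab)]
  omega

end RowIdx
section Tabloid

variable {n : ℕ}

/-- The type of `γ`-tabloids fixed by `g`. -/
def FixedTab (n : ℕ) (γ : ℕ →₀ ℤ) (g : Equiv.Perm (Fin n)) : Type :=
  {t : ℕ → Finset (Fin n) // IsTabloid n γ t ∧ ∀ i, (t i).image g = t i}

/-- The number of `γ`-tabloids fixed by `g`. -/
noncomputable def NFT (n : ℕ) (γ : ℕ →₀ ℤ) (g : Equiv.Perm (Fin n)) : ℕ :=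
  Nat.card (FixedTab n γ g)

lemma tab_empty_of_not_support {γ : ℕ →₀ ℤ} {t : ℕ → Finset (Fin n)}
    (ht : IsTabloid n γ t) {j : ℕ} (hj : γ j = 0) : t j = ∅ := by
  have := ht.2 j
  rw [hj] at this
  exact Finset.card_eq_zero.1 (by exact_mod_cast this)

instance fixedTabFinite (γ : ℕ →₀ ℤ) (g : Equiv.Perm (Fin n)) : Finite (FixedTab n γ g) := by
  apply Finite.of_injective (fun t : FixedTab n γ g => (fun j : γ.support => t.1 j))
  rintro ⟨t, ht, hf⟩ ⟨t', ht', hf'⟩ h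
  apply Subtype.ext
  funext j
  show t j = t' j
  by_cases hj : j ∈ γ.support
  · exact congrFun h ⟨j, hj⟩
  · rw [tab_empty_of_not_support ht (Finsupp.notMem_support_iff.1 hj),
      tab_empty_of_not_support ht' (Finsupp.notMem_support_iff.1 hj)]

/-- `i`-th row of the standard tabloid of shape `γ`. -/
noncomputable def stdRow (n : ℕ) (γ : ℕ →₀ ℤ) (i : ℕ) : Finset (Fin n) :=
  Finset.univ.filter (fun k : Fin n => rowIdx γ (k : ℕ) = i)

lemma mem_stdRow {γ : ℕ →₀ ℤ} {i : ℕ} {k : Fin n} :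
    k ∈ stdRow n γ i ↔ rowIdx γ (k : ℕ) = i := by simp [stdRow]

lemma self_mem_stdRow (γ : ℕ →₀ ℤ) (k : Fin n) : k ∈ stdRow n γ (rowIdx γ (k : ℕ)) :=
  mem_stdRow.2 rfl

lemma stdRow_disjoint (γ : ℕ →₀ ℤ) {i j : ℕ} (hij : i ≠ j) :
    Disjoint (stdRow n γ i) (stdRow n γ j) := by
  rw [Finset.disjoint_left]
  intro k hk hk'
  exact hij ((mem_stdRow.1 hk).symm.trans (mem_stdRow.1 hk'))

/-- The tabloid obtained by letting `σ` act on the standard tabloid. -/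
noncomputable def tabOf (n : ℕ) (γ : ℕ →₀ ℤ) (σ : Equiv.Perm (Fin n)) : ℕ → Finset (Fin n) :=
  fun i => (stdRow n γ i).image σ

lemma mem_young {γ : ℕ →₀ ℤ} {σ : Equiv.Perm (Fin n)} :
    σ ∈ youngSubgroup n γ ↔ ∀ k : Fin n, rowIdx γ ((σ k : Fin n) : ℕ) = rowIdx γ (k : ℕ) :=
  Iff.rfl

lemma mem_young_iff {γ : ℕ →₀ ℤ} {σ : Equiv.Perm (Fin n)} :
    σ ∈ youngSubgroup n γ ↔ ∀ i, (stdRow n γ i).image σ = stdRow n γ i := by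
  rw [mem_young]
  constructor
  · intro hσ i
    apply Finset.eq_of_subset_of_card_le
    · intro x hx
      obtain ⟨k, hk, rfl⟩ := Finset.mem_image.1 hx
      exact mem_stdRow.2 ((hσ k).trans (mem_stdRow.1 hk))
    · rw [Finset.card_image_of_injective _ σ.injective]
  · intro h k
    have : σ k ∈ stdRow n γ (rowIdx γ (k : ℕ)) := by
      rw [← h (rowIdx γ (k : ℕ))]
      exact Finset.mem_image_of_mem σ (self_mem_stdRow γ k)
    exact mem_stdRow.1 this

lemma tabOf_eq_iff {γ : ℕ →₀ ℤ} {σ σ' : Equiv.Perm (Fin n)} :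
    tabOf n γ σ = tabOf n γ σ' ↔ σ⁻¹ * σ' ∈ youngSubgroup n γ := by
  rw [mem_young_iff]
  constructor
  · intro h i
    have h1 : (stdRow n γ i).image σ = (stdRow n γ i).image σ' := congrFun h i
    ext x
    constructor
    · intro hx
      obtain ⟨k, hk, rfl⟩ := Finset.mem_image.1 hx
      have : σ' k ∈ (stdRow n γ i).image σ := by
        rw [h1]; exact Finset.mem_image_of_mem σ' hk
      obtain ⟨m, hm, hm2⟩ := Finset.mem_image.1 this
      have : (σ⁻¹ * σ') k = m := by
        simp only [Equiv.Perm.mul_apply]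
        rw [← hm2]
        exact σ.symm_apply_apply m
      rw [this]; exact hm
    · intro hx
      have : σ x ∈ (stdRow n γ i).image σ' := by
        rw [← h1]; exact Finset.mem_image_of_mem σ hx
      obtain ⟨k, hk, hk2⟩ := Finset.mem_image.1 this
      refine Finset.mem_image.2 ⟨k, hk, ?_⟩
      simp only [Equiv.Perm.mul_apply]
      rw [hk2]
      exact σ.symm_apply_apply x
  · intro h
    funext i
    have h2 : (stdRow n γ i).image σ' = ((stdRow n γ i).image (σ⁻¹ * σ')).image σ := by
      rw [Finset.image_image]
      apply (Finset.image_congr ?_).symm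
      intro k _
      simp [Function.comp, Equiv.Perm.mul_apply]
    show (stdRow n γ i).image σ = (stdRow n γ i).image σ'
    rw [h2, h i]

lemma tabOf_isTabloid (γ : ℕ →₀ ℤ) (hpos : ∀ i, 0 ≤ γ i)
    (hsum : (γ.sum fun _ v => v) = (n : ℤ)) (σ : Equiv.Perm (Fin n)) :
    IsTabloid n γ (tabOf n γ σ) := by
  constructor
  · intro i j hij
    exact (Finset.disjoint_image σ.injective).2 (stdRow_disjoint γ hij)
  · intro i
    show (((stdRow n γ i).image σ).card : ℤ) = γ i
    rw [Finset.card_image_of_injective _ σ.injective]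
    exact row_card γ hpos hsum i

lemma exists_tabOf (γ : ℕ →₀ ℤ) (hpos : ∀ i, 0 ≤ γ i)
    (hsum : (γ.sum fun _ v => v) = (n : ℤ)) {t : ℕ → Finset (Fin n)}
    (ht : IsTabloid n γ t) : ∃ σ : Equiv.Perm (Fin n), tabOf n γ σ = t := by
  have hcard : ∀ i, (stdRow n γ i).card = (t i).card := by
    intro i
    have h1 := row_card γ hpos hsum i
    have h2 := ht.2 i
    exact_mod_cast h1.trans h2.symm
  let e : ∀ i, {x // x ∈ stdRow n γ i} ≃ {x // x ∈ t i} :=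
    fun i => Finset.equivOfCardEq (hcard i)
  let f : Fin n → Fin n := fun k => (e (rowIdx γ (k : ℕ)) ⟨k, self_mem_stdRow γ k⟩).1
  have haux : ∀ (j : ℕ) (k : Fin n) (h1 : rowIdx γ (k : ℕ) = j) (hk : k ∈ stdRow n γ j),
      f k = (e j ⟨k, hk⟩).1 := by
    intro j k h1 hk
    subst h1
    rfl
  have hmem : ∀ k : Fin n, f k ∈ t (rowIdx γ (k : ℕ)) := fun k =>
    (e (rowIdx γ (k : ℕ)) ⟨k, self_mem_stdRow γ k⟩).2
  have hinj : Function.Injective f := by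
    intro a b hab
    have hrow : rowIdx γ (a : ℕ) = rowIdx γ (b : ℕ) := by
      by_contra hne
      have hd := ht.1 _ _ hne
      rw [Finset.disjoint_left] at hd
      exact hd (hmem a) (hab ▸ hmem b)
    have hb' : b ∈ stdRow n γ (rowIdx γ (a : ℕ)) := mem_stdRow.2 hrow.symm
    have h1 : f b = (e (rowIdx γ (a : ℕ)) ⟨b, hb'⟩).1 := haux _ b hrow.symm hb'
    have h2 : (e (rowIdx γ (a : ℕ))) ⟨a, self_mem_stdRow γ a⟩
        = (e (rowIdx γ (a : ℕ))) ⟨b, hb'⟩ := by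
      apply Subtype.ext
      rw [← h1]
      exact hab
    have h3 := (e (rowIdx γ (a : ℕ))).injective h2
    exact congrArg Subtype.val h3
  let σ : Equiv.Perm (Fin n) := Equiv.ofBijective f (Finite.injective_iff_bijective.1 hinj)
  refine ⟨σ, ?_⟩
  funext i
  apply Finset.eq_of_subset_of_card_le
  · intro x hx
    obtain ⟨k, hk, rfl⟩ := Finset.mem_image.1 hx
    have : σ k = f k := rfl
    rw [this, haux i k (mem_stdRow.1 hk) hk]
    exact (e i ⟨k, hk⟩).2
  · show (t i).card ≤ ((stdRow n γ i).image σ).card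
    rw [Finset.card_image_of_injective _ σ.injective, hcard i]

/-- The tabloid associated to a coset of the Young subgroup. -/
noncomputable def tabOfQuot (n : ℕ) (γ : ℕ →₀ ℤ) :
    Equiv.Perm (Fin n) ⧸ youngSubgroup n γ → (ℕ → Finset (Fin n)) :=
  Quotient.lift (tabOf n γ)
    (fun _ _ h => tabOf_eq_iff.2 (QuotientGroup.leftRel_apply.1 h))

lemma tabOfQuot_mk (γ : ℕ →₀ ℤ) (σ : Equiv.Perm (Fin n)) :
    tabOfQuot n γ (σ : Equiv.Perm (Fin n) ⧸ youngSubgroup n γ) = tabOf n γ σ := rfl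

lemma tabOfQuot_injective (γ : ℕ →₀ ℤ) : Function.Injective (tabOfQuot n γ) := by
  intro x y
  induction x using QuotientGroup.induction_on with | _ a =>
  induction y using QuotientGroup.induction_on with | _ b =>
  intro h
  exact QuotientGroup.eq.2 (tabOf_eq_iff.1 h)

lemma tabOfQuot_smul (γ : ℕ →₀ ℤ) (g : Equiv.Perm (Fin n))
    (x : Equiv.Perm (Fin n) ⧸ youngSubgroup n γ) :
    tabOfQuot n γ (g • x) = fun i => (tabOfQuot n γ x i).image g := by
  induction x using QuotientGroup.induction_on with | _ σ =>
  show tabOfQuot n γ ((g * σ : Equiv.Perm (Fin n)) : _) = _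
  funext i
  show (stdRow n γ i).image (g * σ) = ((stdRow n γ i).image σ).image g
  rw [Finset.image_image]
  rfl

lemma tabOfQuot_isTabloid (γ : ℕ →₀ ℤ) (hpos : ∀ i, 0 ≤ γ i)
    (hsum : (γ.sum fun _ v => v) = (n : ℤ)) (x : Equiv.Perm (Fin n) ⧸ youngSubgroup n γ) :
    IsTabloid n γ (tabOfQuot n γ x) := by
  induction x using QuotientGroup.induction_on with | _ σ =>
  exact tabOf_isTabloid γ hpos hsum σ

noncomputable def fixedCosetEquiv (γ : ℕ →₀ ℤ) (hpos : ∀ i, 0 ≤ γ i)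
    (hsum : (γ.sum fun _ v => v) = (n : ℤ)) (g : Equiv.Perm (Fin n)) :
    {x : Equiv.Perm (Fin n) ⧸ youngSubgroup n γ // g • x = x} ≃ FixedTab n γ g where
  toFun x := ⟨tabOfQuot n γ x.1, tabOfQuot_isTabloid γ hpos hsum x.1, by
    intro i
    have h := congrFun (tabOfQuot_smul γ g x.1) i
    rw [x.2] at h
    exact h.symm⟩
  invFun t := ⟨((Classical.choose (exists_tabOf γ hpos hsum t.2.1) : Equiv.Perm (Fin n)) :
      Equiv.Perm (Fin n) ⧸ youngSubgroup n γ), by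
    have hspec := Classical.choose_spec (exists_tabOf γ hpos hsum t.2.1)
    apply tabOfQuot_injective γ
    rw [tabOfQuot_smul, tabOfQuot_mk, hspec]
    funext i
    exact t.2.2 i⟩
  left_inv x := by
    apply Subtype.ext
    apply tabOfQuot_injective γ
    rw [tabOfQuot_mk]
    exact Classical.choose_spec
      (exists_tabOf γ hpos hsum (tabOfQuot_isTabloid γ hpos hsum x.1))
  right_inv t := by
    apply Subtype.ext
    show tabOfQuot n γ ((Classical.choose (exists_tabOf γ hpos hsum t.2.1) :
      Equiv.Perm (Fin n)) : Equiv.Perm (Fin n) ⧸ youngSubgroup n γ) = t.1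
    rw [tabOfQuot_mk]
    exact Classical.choose_spec (exists_tabOf γ hpos hsum t.2.1)

lemma permCharValue_eq_NFT (γ : ℕ →₀ ℤ) (hpos : ∀ i, 0 ≤ γ i)
    (hsum : (γ.sum fun _ v => v) = (n : ℤ)) (g : Equiv.Perm (Fin n)) :
    permCharValue (youngSubgroup n γ) g = (NFT n γ g : ℤ) := by
  unfold permCharValue NFT
  exact_mod_cast congrArg (Nat.cast (R := ℤ))
    (Nat.card_congr (fixedCosetEquiv γ hpos hsum g))

end Tabloid
section Invariance

variable {n : ℕ}

lemma NFT_relabel (γ : ℕ →₀ ℤ) (g : Equiv.Perm (Fin n)) (e : ℕ ≃ ℕ) :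
    NFT n (Finsupp.equivMapDomain e γ) g = NFT n γ g := by
  apply Nat.card_congr
  refine ⟨fun t => ⟨fun i => t.1 (e i), ⟨?_, ?_⟩, ?_⟩,
    fun t => ⟨fun i => t.1 (e.symm i), ⟨?_, ?_⟩, ?_⟩, ?_, ?_⟩
  · intro i j hij
    exact t.2.1.1 _ _ (fun hc => hij (e.injective hc))
  · intro i
    have := t.2.1.2 (e i)
    rwa [Finsupp.equivMapDomain_apply, e.symm_apply_apply] at this
  · intro i
    exact t.2.2 (e i)
  · intro i j hij
    exact t.2.1.1 _ _ (fun hc => hij (e.symm.injective hc))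
  · intro i
    rw [Finsupp.equivMapDomain_apply]
    exact t.2.1.2 (e.symm i)
  · intro i
    exact t.2.2 (e.symm i)
  · intro t
    apply Subtype.ext
    funext i
    show t.1 (e (e.symm i)) = t.1 i
    rw [e.apply_symm_apply]
  · intro t
    apply Subtype.ext
    funext i
    show t.1 (e.symm (e i)) = t.1 i
    rw [e.symm_apply_apply]

lemma fixedTab_image_aux {γ : ℕ →₀ ℤ} {s s' c : Equiv.Perm (Fin n)}
    (hc : ∀ x, c (s x) = s' (c x)) (t : FixedTab n γ s) :
    IsTabloid n γ (fun i => (t.1 i).image c) ∧ ∀ i, ((t.1 i).image c).image s' = (t.1 i).image c := by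
  refine ⟨⟨?_, ?_⟩, ?_⟩
  · intro i j hij
    exact (Finset.disjoint_image c.injective).2 (t.2.1.1 i j hij)
  · intro i
    rw [Finset.card_image_of_injective _ c.injective]
    exact t.2.1.2 i
  · intro i
    rw [Finset.image_image]
    have h1 : (⇑s' ∘ ⇑c) = (⇑c ∘ ⇑s) := by
      funext x
      exact (hc x).symm
    rw [h1, ← Finset.image_image, t.2.2 i]

lemma NFT_conj (γ : ℕ →₀ ℤ) (s c : Equiv.Perm (Fin n)) :
    NFT n γ (c * s * c⁻¹) = NFT n γ s := by
  apply Nat.card_congr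
  have hc : ∀ x, c⁻¹ ((c * s * c⁻¹) x) = s (c⁻¹ x) := by
    intro x
    simp [Equiv.Perm.mul_apply]
  have hc' : ∀ x, c (s x) = (c * s * c⁻¹) (c x) := by
    intro x
    simp [Equiv.Perm.mul_apply]
  refine ⟨fun t => ⟨fun i => (t.1 i).image ⇑(c⁻¹), fixedTab_image_aux hc t⟩,
    fun t => ⟨fun i => (t.1 i).image c, fixedTab_image_aux hc' t⟩, ?_, ?_⟩
  · intro t
    apply Subtype.ext
    funext i
    show Finset.image (⇑c) (Finset.image (⇑(c⁻¹)) (t.1 i)) = t.1 i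
    rw [Finset.image_image]
    have : (⇑c ∘ ⇑(c⁻¹)) = id := by funext x; simp
    rw [this, Finset.image_id]
  · intro t
    apply Subtype.ext
    funext i
    show Finset.image (⇑(c⁻¹)) (Finset.image (⇑c) (t.1 i)) = t.1 i
    rw [Finset.image_image]
    have : (⇑(c⁻¹) ∘ ⇑c) = id := by funext x; simp
    rw [this, Finset.image_id]

lemma NFT_cycleType (γ : ℕ →₀ ℤ) {s s' : Equiv.Perm (Fin n)}
    (h : s.cycleType = s'.cycleType) : NFT n γ s = NFT n γ s' := by
  obtain ⟨c, hc⟩ := isConj_iff.1 (Equiv.Perm.isConj_iff_cycleType_eq.2 h)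
  rw [← hc, NFT_conj]

lemma NFT_zero_of_neg (γ : ℕ →₀ ℤ) (g : Equiv.Perm (Fin n)) {j : ℕ} (hj : γ j < 0) :
    NFT n γ g = 0 := by
  have : IsEmpty (FixedTab n γ g) := by
    constructor
    intro t
    have h1 := t.2.1.2 j
    have h2 : (0 : ℤ) ≤ ((t.1 j).card : ℤ) := Int.natCast_nonneg _
    omega
  exact Nat.card_of_isEmpty

lemma xi_eq_NFT (γ : ℕ →₀ ℤ) (g : Equiv.Perm (Fin n)) (hpos : ∀ i, 0 ≤ γ i)
    (hsum : (γ.sum fun _ v => v) = (n : ℤ)) : xi n γ g = (NFT n γ g : ℤ) := by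
  unfold xi
  rw [if_pos ⟨hpos, hsum⟩]
  exact permCharValue_eq_NFT γ hpos hsum g

lemma xi_relabel (γ : ℕ →₀ ℤ) (g : Equiv.Perm (Fin n)) (e : ℕ ≃ ℕ) :
    xi n (Finsupp.equivMapDomain e γ) g = xi n γ g := by
  have hs : ((Finsupp.equivMapDomain e γ).sum fun _ v => v) = γ.sum fun _ v => v :=
    Finsupp.sum_equivMapDomain e γ _
  have hp : (∀ i, 0 ≤ (Finsupp.equivMapDomain e γ) i) ↔ (∀ i, 0 ≤ γ i) := by
    constructor
    · intro h i
      have := h (e i)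
      rwa [Finsupp.equivMapDomain_apply, e.symm_apply_apply] at this
    · intro h i
      rw [Finsupp.equivMapDomain_apply]
      exact h _
  by_cases hc : (∀ i, 0 ≤ γ i) ∧ (γ.sum fun _ v => v) = (n : ℤ)
  · rw [xi_eq_NFT γ g hc.1 hc.2, xi_eq_NFT _ g (hp.2 hc.1) (hs.trans hc.2), NFT_relabel]
  · unfold xi
    rw [if_neg hc, if_neg]
    rintro ⟨h1, h2⟩
    exact hc ⟨hp.1 h1, hs ▸ h2⟩

end Invariance
section Branching

variable {N : ℕ}

/-- `Fin N` as the subtype of `Fin (N+1)` of elements `< N`. -/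
def finNEquiv (N : ℕ) : Fin N ≃ {x : Fin (N + 1) // (x : ℕ) < N} where
  toFun x := ⟨x.castSucc, by simpa using x.isLt⟩
  invFun y := ⟨(y.1 : ℕ), y.2⟩
  left_inv x := by ext; simp
  right_inv y := by ext; simp

/-- Extension of a permutation of `Fin N` to `Fin (N+1)`, fixing the last point. -/
def extPerm (τ : Equiv.Perm (Fin N)) : Equiv.Perm (Fin (N + 1)) :=
  τ.extendDomain (finNEquiv N)

lemma extPerm_castSucc (τ : Equiv.Perm (Fin N)) (x : Fin N) :
    extPerm τ x.castSucc = (τ x).castSucc := by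
  have h : ((x.castSucc : Fin (N + 1)) : ℕ) < N := by simpa using x.isLt
  rw [extPerm, Equiv.Perm.extendDomain_apply_subtype τ (finNEquiv N) h]
  have h2 : (finNEquiv N).symm ⟨x.castSucc, h⟩ = x := by
    ext
    simp [finNEquiv]
  rw [h2]
  rfl

lemma extPerm_last (τ : Equiv.Perm (Fin N)) : extPerm τ (Fin.last N) = Fin.last N :=
  Equiv.Perm.extendDomain_apply_not_subtype _ _ (by simp)

lemma extPerm_cycleType (τ : Equiv.Perm (Fin N)) :
    (extPerm τ).cycleType = τ.cycleType :=
  Equiv.Perm.cycleType_extendDomain _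

/-- Restriction of a family of rows to `Fin N`. -/
noncomputable def resRows (t : ℕ → Finset (Fin (N + 1))) : ℕ → Finset (Fin N) :=
  fun j => Finset.univ.filter (fun x : Fin N => x.castSucc ∈ t j)

/-- Extension of a family of rows, inserting the last point into row `i`. -/
noncomputable def extRows (t' : ℕ → Finset (Fin N)) (i : ℕ) : ℕ → Finset (Fin (N + 1)) :=
  fun j => (t' j).image Fin.castSucc ∪ (if j = i then {Fin.last N} else ∅)

lemma mem_extRows_last {t' : ℕ → Finset (Fin N)} {i j : ℕ} :
    Fin.last N ∈ extRows t' i j ↔ j = i := by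
  unfold extRows
  rw [Finset.mem_union]
  constructor
  · rintro (h | h)
    · obtain ⟨x, _, hx⟩ := Finset.mem_image.1 h
      exact absurd hx (Fin.castSucc_lt_last x).ne
    · by_cases hj : j = i
      · exact hj
      · rw [if_neg hj] at h
        exact absurd h (Finset.notMem_empty _)
  · intro hj
    rw [if_pos hj]
    exact Or.inr (Finset.mem_singleton_self _)

lemma mem_extRows_castSucc {t' : ℕ → Finset (Fin N)} {i j : ℕ} {x : Fin N} :
    x.castSucc ∈ extRows t' i j ↔ x ∈ t' j := by
  unfold extRows
  rw [Finset.mem_union]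
  constructor
  · rintro (h | h)
    · obtain ⟨y, hy, hyx⟩ := Finset.mem_image.1 h
      rwa [← Fin.castSucc_injective N hyx]
    · exfalso
      by_cases hj : j = i
      · rw [if_pos hj, Finset.mem_singleton] at h
        exact (Fin.castSucc_lt_last x).ne h
      · rw [if_neg hj] at h
        exact Finset.notMem_empty _ h
  · intro hx
    exact Or.inl (Finset.mem_image_of_mem _ hx)

lemma exists_lastRow (γ : ℕ →₀ ℤ) {K : ℕ} (hK : γ.support ⊆ Finset.range K)
    (hpos : ∀ i, 0 ≤ γ i) (hsum : (γ.sum fun _ v => v) = ((N + 1 : ℕ) : ℤ))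
    {t : ℕ → Finset (Fin (N + 1))} (ht : IsTabloid (N + 1) γ t) :
    ∃ i : Fin K, ∀ j, Fin.last N ∈ t j ↔ j = (i : ℕ) := by
  have hdisj : ∀ i ∈ Finset.range K, ∀ j ∈ Finset.range K, i ≠ j → Disjoint (t i) (t j) :=
    fun i _ j _ hij => ht.1 i j hij
  have hcard : (((Finset.range K).biUnion t).card : ℤ) = ((N + 1 : ℕ) : ℤ) := by
    rw [Finset.card_biUnion hdisj, Nat.cast_sum]
    have h1 : ∀ i ∈ Finset.range K, ((t i).card : ℤ) = γ i := fun i _ => ht.2 i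
    rw [Finset.sum_congr rfl h1]
    show PP γ K = _
    rw [PP_sum_of_subset γ hK, hsum]
  have hu : (Finset.range K).biUnion t = Finset.univ := by
    apply Finset.eq_univ_of_card
    rw [Fintype.card_fin]
    exact_mod_cast hcard
  have hmem : Fin.last N ∈ (Finset.range K).biUnion t := by
    rw [hu]; exact Finset.mem_univ _
  obtain ⟨i, hi, hmem⟩ := Finset.mem_biUnion.1 hmem
  refine ⟨⟨i, Finset.mem_range.1 hi⟩, fun j => ⟨fun hj => ?_, fun hj => by rwa [hj]⟩⟩
  by_contra hne
  have := ht.1 j i hne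
  rw [Finset.disjoint_left] at this
  exact this hj hmem

lemma resRows_card {γ : ℕ →₀ ℤ} {t : ℕ → Finset (Fin (N + 1))} (ht : IsTabloid (N + 1) γ t)
    {i : ℕ} (hlast : ∀ j, Fin.last N ∈ t j ↔ j = i) (j : ℕ) :
    ((resRows t j).card : ℤ) = γ j - (if j = i then 1 else 0) := by
  have hdecomp : t j = (resRows t j).image Fin.castSucc ∪ (if j = i then {Fin.last N} else ∅) := by
    ext y
    constructor
    · intro hy
      by_cases hyl : y = Fin.last N
      · subst hyl
        rw [Finset.mem_union, if_pos ((hlast j).1 hy)]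
        exact Or.inr (Finset.mem_singleton_self _)
      · have hyN : (y : ℕ) < N := by
          rcases Nat.lt_or_ge (y : ℕ) N with h | h
          · exact h
          · exfalso
            apply hyl
            have : (y : ℕ) = N := by omega
            exact Fin.ext (by simpa using this)
        refine Finset.mem_union_left _ (Finset.mem_image.2 ⟨⟨(y : ℕ), hyN⟩, ?_, ?_⟩)
        · rw [resRows, Finset.mem_filter]
          refine ⟨Finset.mem_univ _, ?_⟩
          have : (⟨(y : ℕ), hyN⟩ : Fin N).castSucc = y := Fin.ext (by simp)
          rwa [this]
        · exact Fin.ext (by simp)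
    · intro hy
      rcases Finset.mem_union.1 hy with h | h
      · obtain ⟨x, hx, rfl⟩ := Finset.mem_image.1 h
        rw [resRows, Finset.mem_filter] at hx
        exact hx.2
      · by_cases hj : j = i
        · rw [if_pos hj, Finset.mem_singleton] at h
          subst h
          exact (hlast j).2 hj
        · rw [if_neg hj] at h
          exact absurd h (Finset.notMem_empty _)
  have hne : Disjoint ((resRows t j).image Fin.castSucc) (if j = i then {Fin.last N} else ∅) := by
    rw [Finset.disjoint_right]
    intro y hy
    by_cases hj : j = i
    · rw [if_pos hj, Finset.mem_singleton] at hy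
      subst hy
      intro hc
      obtain ⟨x, _, hx⟩ := Finset.mem_image.1 hc
      exact (Fin.castSucc_lt_last x).ne hx
    · rw [if_neg hj] at hy
      exact absurd hy (Finset.notMem_empty _)
  have hcard := ht.2 j
  rw [hdecomp, Finset.card_union_of_disjoint hne,
    Finset.card_image_of_injective _ (Fin.castSucc_injective N)] at hcard
  have hite : ((if j = i then ({Fin.last N} : Finset (Fin (N+1))) else ∅).card : ℤ)
      = (if j = i then 1 else 0) := by
    by_cases hj : j = i <;> simp [hj]
  rw [← hcard, Nat.cast_add, hite]
  ring

lemma resRows_fixed {t : ℕ → Finset (Fin (N + 1))} {τ : Equiv.Perm (Fin N)}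
    (hfix : ∀ j, (t j).image (extPerm τ) = t j) (j : ℕ) :
    (resRows t j).image τ = resRows t j := by
  apply Finset.eq_of_subset_of_card_le
  · intro y hy
    obtain ⟨x, hx, rfl⟩ := Finset.mem_image.1 hy
    rw [resRows, Finset.mem_filter] at hx ⊢
    refine ⟨Finset.mem_univ _, ?_⟩
    rw [← extPerm_castSucc τ x, ← hfix j]
    exact Finset.mem_image_of_mem _ hx.2
  · rw [Finset.card_image_of_injective _ τ.injective]

lemma extRows_isTabloid {γ : ℕ →₀ ℤ} {t' : ℕ → Finset (Fin N)} {i : ℕ}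
    (ht' : IsTabloid N (γ - Finsupp.single i 1) t') :
    IsTabloid (N + 1) γ (extRows t' i) := by
  constructor
  · intro j j' hjj'
    rw [Finset.disjoint_left]
    intro y hy hy'
    by_cases hyl : y = Fin.last N
    · subst hyl
      rw [mem_extRows_last] at hy hy'
      exact hjj' (hy.trans hy'.symm)
    · have hyN : (y : ℕ) < N := by
        rcases Nat.lt_or_ge (y : ℕ) N with h | h
        · exact h
        · exact absurd (Fin.ext (by simp; omega) : y = Fin.last N) hyl
      have hy2 : (⟨(y : ℕ), hyN⟩ : Fin N).castSucc = y := Fin.ext (by simp)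
      rw [← hy2, mem_extRows_castSucc] at hy hy'
      have := ht'.1 j j' hjj'
      rw [Finset.disjoint_left] at this
      exact this hy hy'
  · intro j
    have h1 : ((t' j).card : ℤ) = γ j - (if i = j then 1 else 0) := by
      have := ht'.2 j
      rwa [Finsupp.sub_apply, Finsupp.single_apply] at this
    have hdisj : Disjoint ((t' j).image Fin.castSucc) (if j = i then ({Fin.last N} : Finset (Fin (N+1))) else ∅) := by
      rw [Finset.disjoint_right]
      intro y hy
      by_cases hj : j = i
      · rw [if_pos hj, Finset.mem_singleton] at hy
        subst hy
        intro hc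
        obtain ⟨x, _, hx⟩ := Finset.mem_image.1 hc
        exact (Fin.castSucc_lt_last x).ne hx
      · rw [if_neg hj] at hy
        exact absurd hy (Finset.notMem_empty _)
    show (((t' j).image Fin.castSucc ∪ _).card : ℤ) = γ j
    rw [Finset.card_union_of_disjoint hdisj,
      Finset.card_image_of_injective _ (Fin.castSucc_injective N), Nat.cast_add, h1]
    by_cases hj : j = i
    · rw [if_pos hj, if_pos hj.symm]
      simp
    · rw [if_neg hj, if_neg (fun hc => hj hc.symm)]
      simp

lemma extRows_fixed {t' : ℕ → Finset (Fin N)} {i : ℕ} {τ : Equiv.Perm (Fin N)}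
    (hfix : ∀ j, (t' j).image τ = t' j) (j : ℕ) :
    ((extRows t' i j).image (extPerm τ)) = extRows t' i j := by
  unfold extRows
  rw [Finset.image_union]
  congr 1
  · rw [Finset.image_image]
    have h1 : (⇑(extPerm τ) ∘ Fin.castSucc) = (Fin.castSucc ∘ ⇑τ) := by
      funext x
      exact extPerm_castSucc τ x
    rw [h1, ← Finset.image_image, hfix j]
  · by_cases hj : j = i
    · rw [if_pos hj, Finset.image_singleton, extPerm_last]
    · rw [if_neg hj, Finset.image_empty]

lemma resRows_extRows {t' : ℕ → Finset (Fin N)} {i : ℕ} :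
    resRows (extRows t' i) = t' := by
  funext j
  ext x
  rw [resRows, Finset.mem_filter]
  constructor
  · intro h
    exact mem_extRows_castSucc.1 h.2
  · intro h
    exact ⟨Finset.mem_univ _, mem_extRows_castSucc.2 h⟩

end Branching
section Branching2

variable {N : ℕ}

lemma sigma_eq_helper {K : ℕ} {S : Fin K → Type} (a b : Fin K) (x : S a) (y : S b)
    (h : a = b) (h2 : HEq x y) : (⟨a, x⟩ : Σ i, S i) = ⟨b, y⟩ := by
  subst h
  rw [eq_of_heq h2]

noncomputable def branchEquiv (γ : ℕ →₀ ℤ) {K : ℕ} (hK : γ.support ⊆ Finset.range K)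
    (hpos : ∀ i, 0 ≤ γ i) (hsum : (γ.sum fun _ v => v) = ((N + 1 : ℕ) : ℤ))
    (τ : Equiv.Perm (Fin N)) :
    FixedTab (N + 1) γ (extPerm τ) ≃
      Σ i : Fin K, FixedTab N (γ - Finsupp.single (i : ℕ) 1) τ where
  toFun t :=
    let hex := exists_lastRow γ hK hpos hsum t.2.1
    ⟨hex.choose, ⟨resRows t.1,
      ⟨fun i j hij => by
        rw [Finset.disjoint_left]
        intro x hx hx'
        rw [resRows, Finset.mem_filter] at hx hx'
        have := t.2.1.1 i j hij
        rw [Finset.disjoint_left] at this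
        exact this hx.2 hx'.2,
       fun j => by
        rw [resRows_card t.2.1 hex.choose_spec j, Finsupp.sub_apply, Finsupp.single_apply]
        by_cases hj : j = (hex.choose : ℕ)
        · rw [if_pos hj, if_pos hj.symm]
        · rw [if_neg hj, if_neg (fun hc => hj hc.symm)]⟩,
      resRows_fixed t.2.2⟩⟩
  invFun p := ⟨extRows p.2.1 (p.1 : ℕ), extRows_isTabloid p.2.2.1, extRows_fixed p.2.2.2⟩
  left_inv t := by
    apply Subtype.ext
    show extRows (resRows t.1) _ = t.1
    funext j
    have hlast := (exists_lastRow γ hK hpos hsum t.2.1).choose_spec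
    ext y
    by_cases hyl : y = Fin.last N
    · subst hyl
      rw [mem_extRows_last, hlast j]
    · have hyN : (y : ℕ) < N := by
        rcases Nat.lt_or_ge (y : ℕ) N with h | h
        · exact h
        · exact absurd (Fin.ext (by simp; omega) : y = Fin.last N) hyl
      have hy2 : (⟨(y : ℕ), hyN⟩ : Fin N).castSucc = y := Fin.ext (by simp)
      rw [← hy2, mem_extRows_castSucc, resRows, Finset.mem_filter]
      simp only [Finset.mem_univ, true_and]
  right_inv p := by
    obtain ⟨i, t'⟩ := p
    have hlast2 : ∀ j, Fin.last N ∈ extRows t'.1 (i : ℕ) j ↔ j = (i : ℕ) :=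
      fun j => mem_extRows_last
    set T : FixedTab (N + 1) γ (extPerm τ) :=
      ⟨extRows t'.1 (i : ℕ), extRows_isTabloid t'.2.1, extRows_fixed t'.2.2⟩ with hT
    have hex := exists_lastRow γ hK hpos hsum T.2.1
    have hidx : hex.choose = i := by
      have h1 := (hex.choose_spec (i : ℕ)).2
      have h2 : Fin.last N ∈ T.1 (i : ℕ) := (hlast2 (i : ℕ)).2 rfl
      have h3 : ((i : ℕ)) = (hex.choose : ℕ) := (hex.choose_spec (i : ℕ)).1 h2
      exact Fin.ext h3.symm
    refine sigma_eq_helper _ _ _ _ hidx ?_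
    have hres : resRows T.1 = t'.1 := resRows_extRows
    -- second components as subtypes over types depending on the index
    have : ∀ (a b : Fin K) (h : a = b)
        (x : FixedTab N (γ - Finsupp.single (a : ℕ) 1) τ)
        (y : FixedTab N (γ - Finsupp.single (b : ℕ) 1) τ),
        x.1 = y.1 → HEq x y := by
      rintro a b rfl x y hxy
      exact heq_of_eq (Subtype.ext hxy)
    exact this _ _ hidx _ _ hres

lemma sub_single_apply (γ : ℕ →₀ ℤ) (i j : ℕ) :
    ((γ - Finsupp.single i 1 : ℕ →₀ ℤ)) j = γ j - (if i = j then 1 else 0) := by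
  rw [Finsupp.sub_apply, Finsupp.single_apply]

lemma NFT_branch_ext (γ : ℕ →₀ ℤ) {K : ℕ} (hK : γ.support ⊆ Finset.range K)
    (hpos : ∀ i, 0 ≤ γ i) (hsum : (γ.sum fun _ v => v) = ((N + 1 : ℕ) : ℤ))
    (τ : Equiv.Perm (Fin N)) :
    NFT (N + 1) γ (extPerm τ) = ∑ i ∈ Finset.range K, NFT N (γ - Finsupp.single i 1) τ := by
  unfold NFT
  rw [Nat.card_congr (branchEquiv γ hK hpos hsum τ)]
  letI : ∀ i : Fin K, Fintype (FixedTab N (γ - Finsupp.single (i : ℕ) 1) τ) :=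
    fun i => Fintype.ofFinite _
  rw [Nat.card_eq_fintype_card, Fintype.card_sigma,
    ← Fin.sum_univ_eq_sum_range (fun i => Nat.card (FixedTab N (γ - Finsupp.single i 1) τ)) K]
  apply Finset.sum_congr rfl
  intro i _
  rw [Nat.card_eq_fintype_card]

lemma NFT_branch (γ : ℕ →₀ ℤ) {K : ℕ} (hK : γ.support ⊆ Finset.range K)
    (hpos : ∀ i, 0 ≤ γ i) (hsum : (γ.sum fun _ v => v) = ((N + 1 : ℕ) : ℤ))
    {s : Equiv.Perm (Fin (N + 1))} {τ : Equiv.Perm (Fin N)}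
    (hcyc : s.cycleType = τ.cycleType) :
    NFT (N + 1) γ s = ∑ i ∈ Finset.range K, NFT N (γ - Finsupp.single i 1) τ := by
  rw [NFT_cycleType γ (show s.cycleType = (extPerm τ).cycleType by
      rw [extPerm_cycleType, hcyc]),
    NFT_branch_ext γ hK hpos hsum τ]

lemma xi_branch (γ : ℕ →₀ ℤ) {K : ℕ} (hK : γ.support ⊆ Finset.range K)
    {s : Equiv.Perm (Fin (N + 1))} {τ : Equiv.Perm (Fin N)}
    (hcyc : s.cycleType = τ.cycleType) :
    xi (N + 1) γ s = ∑ i ∈ Finset.range K, xi N (γ - Finsupp.single i 1) τ := by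
  by_cases hc : (∀ i, 0 ≤ γ i) ∧ (γ.sum fun _ v => v) = (((N + 1) : ℕ) : ℤ)
  · rw [xi_eq_NFT γ s hc.1 hc.2, NFT_branch γ hK hc.1 hc.2 hcyc, Nat.cast_sum]
    apply Finset.sum_congr rfl
    intro i _
    by_cases hγi : 1 ≤ γ i
    · rw [xi_eq_NFT]
      · intro j
        rw [sub_single_apply]
        by_cases hj : i = j
        · subst hj; rw [if_pos rfl]; omega
        · rw [if_neg hj]; have := hc.1 j; omega
      · rw [fsum_sub, fsum_single, hc.2]
        push_cast
        ring
    · have h0 : γ i = 0 := le_antisymm (by omega) (hc.1 i)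
      have hneg : ((γ - Finsupp.single i 1 : ℕ →₀ ℤ)) i < 0 := by
        rw [sub_single_apply, if_pos rfl]; omega
      rw [NFT_zero_of_neg _ τ hneg, Nat.cast_zero]
      unfold xi
      rw [if_neg]
      rintro ⟨h1, _⟩
      have := h1 i
      omega
  · unfold xi
    rw [if_neg hc]
    symm
    apply Finset.sum_eq_zero
    intro i _
    rw [if_neg]
    rintro ⟨h1, h2⟩
    apply hc
    constructor
    · intro j
      have := h1 j
      rw [sub_single_apply] at this
      by_cases hj : i = j
      · subst hj; rw [if_pos rfl] at this; omega
      · rw [if_neg hj] at this; omega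
    · rw [fsum_sub, fsum_single] at h2
      push_cast at h2 ⊢
      omega

end Branching2
section Chi

/-- The shift finsupp `σ - id` on `Fin l`. -/
noncomputable def shiftF (l : ℕ) (σ : Equiv.Perm (Fin l)) : ℕ →₀ ℤ :=
  ∑ i : Fin l, Finsupp.single (i : ℕ) (((σ i : ℕ) : ℤ) - (i : ℕ))

lemma chi_def (n l : ℕ) (δ : ℕ →₀ ℤ) (g : Equiv.Perm (Fin n)) :
    chi n l δ g = ∑ σ : Equiv.Perm (Fin l),
      (Equiv.Perm.sign σ : ℤ) * xi n (δ + shiftF l σ) g := rfl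

lemma shiftF_apply (l : ℕ) (σ : Equiv.Perm (Fin l)) (j : ℕ) :
    shiftF l σ j = if h : j < l then ((σ ⟨j, h⟩ : ℕ) : ℤ) - (j : ℕ) else 0 :=
  sum_single_fin_apply l _ j

lemma chi_eq_zero_of_shiftEq (n l : ℕ) (δ : ℕ →₀ ℤ) (g : Equiv.Perm (Fin n))
    (a b : Fin l) (hab : a ≠ b) (h : δ (a : ℕ) - (a : ℕ) = δ (b : ℕ) - (b : ℕ)) :
    chi n l δ g = 0 := by
  have hvab : (a : ℕ) ≠ (b : ℕ) := fun hc => hab (Fin.ext hc)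
  have key : ∀ σ : Equiv.Perm (Fin l),
      δ + shiftF l (σ * Equiv.swap a b)
        = Finsupp.equivMapDomain (Equiv.swap (a : ℕ) (b : ℕ)) (δ + shiftF l σ) := by
    intro σ
    ext j
    rw [Finsupp.equivMapDomain_apply, Equiv.symm_swap, Finsupp.add_apply, Finsupp.add_apply,
      shiftF_apply, shiftF_apply]
    by_cases hja : j = (a : ℕ)
    · subst hja
      rw [Equiv.swap_apply_left, dif_pos a.isLt, dif_pos b.isLt]
      have h1 : (⟨(a : ℕ), a.isLt⟩ : Fin l) = a := Fin.ext rfl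
      have h2 : (⟨(b : ℕ), b.isLt⟩ : Fin l) = b := Fin.ext rfl
      rw [h1, h2]
      have h3 : (σ * Equiv.swap a b) a = σ b := by
        rw [Equiv.Perm.mul_apply, Equiv.swap_apply_left]
      rw [h3]
      omega
    · by_cases hjb : j = (b : ℕ)
      · subst hjb
        rw [Equiv.swap_apply_right, dif_pos a.isLt, dif_pos b.isLt]
        have h1 : (⟨(a : ℕ), a.isLt⟩ : Fin l) = a := Fin.ext rfl
        have h2 : (⟨(b : ℕ), b.isLt⟩ : Fin l) = b := Fin.ext rfl
        rw [h1, h2]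
        have h3 : (σ * Equiv.swap a b) b = σ a := by
          rw [Equiv.Perm.mul_apply, Equiv.swap_apply_right]
        rw [h3]
        omega
      · rw [Equiv.swap_apply_of_ne_of_ne hja hjb]
        by_cases hjl : j < l
        · rw [dif_pos hjl, dif_pos hjl]
          have h3 : (σ * Equiv.swap a b) ⟨j, hjl⟩ = σ ⟨j, hjl⟩ := by
            rw [Equiv.Perm.mul_apply,
              Equiv.swap_apply_of_ne_of_ne (fun hc => hja (congrArg Fin.val hc))
                (fun hc => hjb (congrArg Fin.val hc))]
          rw [h3]
        · rw [dif_neg hjl, dif_neg hjl]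
  have h2 : (∑ σ : Equiv.Perm (Fin l), (Equiv.Perm.sign σ : ℤ) * xi n (δ + shiftF l σ) g)
      = - ∑ σ : Equiv.Perm (Fin l), (Equiv.Perm.sign σ : ℤ) * xi n (δ + shiftF l σ) g := by
    conv_lhs => rw [← Equiv.sum_comp (Equiv.mulRight (Equiv.swap a b))
      (fun σ => (Equiv.Perm.sign σ : ℤ) * xi n (δ + shiftF l σ) g)]
    rw [← Finset.sum_neg_distrib]
    apply Finset.sum_congr rfl
    intro σ _
    show (Equiv.Perm.sign (σ * Equiv.swap a b) : ℤ) * xi n (δ + shiftF l (σ * Equiv.swap a b)) g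
      = -((Equiv.Perm.sign σ : ℤ) * xi n (δ + shiftF l σ) g)
    rw [key σ, xi_relabel, Equiv.Perm.sign_mul, Equiv.Perm.sign_swap hab]
    push_cast
    ring
  rw [chi_def]
  omega

lemma lt_iff_ne_last {l : ℕ} (x : Fin (l + 1)) : (x : ℕ) < l ↔ x ≠ Fin.last l := by
  constructor
  · intro h hc
    subst hc
    simp at h
  · intro h
    have h2 := x.isLt
    rcases Nat.lt_or_ge (x : ℕ) l with h3 | h3
    · exact h3
    · exfalso
      exact h (Fin.ext (by simp; omega))

lemma hp_aux {l : ℕ} {σ : Equiv.Perm (Fin (l + 1))} (h : σ (Fin.last l) = Fin.last l) :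
    ∀ x : Fin (l + 1), ((x : ℕ) < l) ↔ (((σ x : Fin (l + 1)) : ℕ) < l) := by
  intro x
  rw [lt_iff_ne_last, lt_iff_ne_last]
  constructor
  · intro hx hc
    exact hx (σ.injective (hc.trans h.symm))
  · intro hx hc
    subst hc
    exact hx h

/-- Restriction of a permutation of `Fin (l+1)` fixing the last point. -/
noncomputable def resPerm (l : ℕ) (σ : Equiv.Perm (Fin (l + 1))) : Equiv.Perm (Fin l) :=
  if h : σ (Fin.last l) = Fin.last l then
    (Equiv.permCongr (finNEquiv l).symm) (σ.subtypePerm (fun x => (hp_aux h x).symm))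
  else 1

lemma resPerm_castSucc {l : ℕ} {σ : Equiv.Perm (Fin (l + 1))}
    (h : σ (Fin.last l) = Fin.last l) (x : Fin l) :
    ((resPerm l σ) x).castSucc = σ x.castSucc := by
  unfold resPerm
  rw [dif_pos h]
  apply Fin.ext
  simp [Equiv.permCongr_apply, finNEquiv, Equiv.Perm.subtypePerm_apply]

lemma extPerm_resPerm {l : ℕ} {σ : Equiv.Perm (Fin (l + 1))}
    (h : σ (Fin.last l) = Fin.last l) : extPerm (resPerm l σ) = σ := by
  apply Equiv.ext
  intro x
  induction x using Fin.lastCases with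
  | last => rw [extPerm_last, h]
  | cast y => rw [extPerm_castSucc, resPerm_castSucc h]

lemma resPerm_extPerm {l : ℕ} (τ : Equiv.Perm (Fin l)) : resPerm l (extPerm τ) = τ := by
  apply Equiv.ext
  intro x
  apply Fin.castSucc_injective
  rw [resPerm_castSucc (extPerm_last τ), extPerm_castSucc]

lemma chi_stab (n l : ℕ) (δ : ℕ →₀ ℤ) (g : Equiv.Perm (Fin n)) (hδ : δ l = 0) :
    chi n (l + 1) δ g = chi n l δ g := by
  rw [chi_def, chi_def]
  have hvanish : ∀ σ : Equiv.Perm (Fin (l + 1)), σ (Fin.last l) ≠ Fin.last l →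
      xi n (δ + shiftF (l + 1) σ) g = 0 := by
    intro σ hσ
    unfold xi
    rw [if_neg]
    rintro ⟨h1, _⟩
    have h2 := h1 l
    rw [Finsupp.add_apply, shiftF_apply, dif_pos (Nat.lt_succ_self l), hδ] at h2
    have h3 : ((σ ⟨l, Nat.lt_succ_self l⟩ : Fin (l + 1)) : ℕ) < l := by
      rw [lt_iff_ne_last]
      intro hc
      apply hσ
      have : (⟨l, Nat.lt_succ_self l⟩ : Fin (l + 1)) = Fin.last l := Fin.ext rfl
      rwa [this] at hc
    omega
  rw [← Finset.sum_subset (Finset.filter_subset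
    (fun σ : Equiv.Perm (Fin (l + 1)) => σ (Fin.last l) = Fin.last l) Finset.univ)
    (fun σ _ hσ => by
      rw [Finset.mem_filter, not_and] at hσ
      rw [hvanish σ (hσ (Finset.mem_univ σ)), mul_zero])]
  apply Finset.sum_nbij' (resPerm l) extPerm
  · intro σ _
    exact Finset.mem_univ _
  · intro τ' _
    rw [Finset.mem_filter]
    exact ⟨Finset.mem_univ _, extPerm_last τ'⟩
  · intro σ hσ
    rw [Finset.mem_filter] at hσ
    exact extPerm_resPerm hσ.2
  · intro τ' _
    exact resPerm_extPerm τ'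
  · intro σ hσ
    rw [Finset.mem_filter] at hσ
    have hfix := hσ.2
    have hsign : Equiv.Perm.sign σ = Equiv.Perm.sign (resPerm l σ) := by
      conv_lhs => rw [← extPerm_resPerm hfix]
      exact Equiv.Perm.sign_extendDomain _ _
    have hshift : δ + shiftF (l + 1) σ = δ + shiftF l (resPerm l σ) := by
      ext j
      rw [Finsupp.add_apply, Finsupp.add_apply, shiftF_apply, shiftF_apply]
      by_cases hjl : j < l
      · rw [dif_pos hjl, dif_pos (Nat.lt_succ_of_lt hjl)]
        have h1 : (⟨j, Nat.lt_succ_of_lt hjl⟩ : Fin (l + 1)) = (⟨j, hjl⟩ : Fin l).castSucc :=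
          Fin.ext rfl
        rw [h1, ← resPerm_castSucc hfix]
        rfl
      · by_cases hjl1 : j < l + 1
        · have hj : j = l := by omega
          subst hj
          rw [dif_pos hjl1, dif_neg hjl, hδ]
          have h1 : (⟨j, hjl1⟩ : Fin (j + 1)) = Fin.last j := Fin.ext rfl
          rw [h1, hfix]
          simp
        · rw [dif_neg hjl, dif_neg hjl1]
    rw [hsign, hshift]

lemma chi_vanish_last (n l : ℕ) (δ : ℕ →₀ ℤ) (g : Equiv.Perm (Fin n)) (hneg : δ l < 0) :
    chi n (l + 1) δ g = 0 := by
  rw [chi_def]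
  apply Finset.sum_eq_zero
  intro σ _
  unfold xi
  rw [if_neg, mul_zero]
  rintro ⟨h1, _⟩
  have h2 := h1 l
  rw [Finsupp.add_apply, shiftF_apply, dif_pos (Nat.lt_succ_self l)] at h2
  have h3 := (σ ⟨l, Nat.lt_succ_self l⟩).isLt
  omega

end Chi
section Partition

lemma partition_zero_of_ge {α : ℕ →₀ ℕ} {n : ℕ} (hα : IsPartitionOf α n) {j : ℕ}
    (hj : n ≤ j) : α j = 0 := by
  by_contra h0
  have h1 : 1 ≤ α j := Nat.one_le_iff_ne_zero.2 h0
  have anti : ∀ a b : ℕ, a ≤ b → α b ≤ α a := fun a b hab =>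
    antitone_nat_of_succ_le hα.1 hab
  have hge : ∀ a ∈ Finset.range (j + 1), 1 ≤ α a := fun a ha =>
    le_trans h1 (anti a j (Nat.lt_succ_iff.1 (Finset.mem_range.1 ha)))
  have hsum1 : j + 1 ≤ ∑ a ∈ Finset.range (j + 1), α a := by
    calc j + 1 = ∑ _a ∈ Finset.range (j + 1), 1 := by simp
    _ ≤ _ := Finset.sum_le_sum hge
  have hsum2 : ∑ a ∈ Finset.range (j + 1), α a ≤ α.sum fun _ v => v := by
    rw [Finsupp.sum]
    calc ∑ a ∈ Finset.range (j + 1), α a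
        ≤ ∑ a ∈ Finset.range (j + 1) ∪ α.support, α a :=
          Finset.sum_le_sum_of_subset Finset.subset_union_left
      _ = ∑ a ∈ α.support, α a :=
          (Finset.sum_subset Finset.subset_union_right
            (fun x _ hx => Finsupp.notMem_support_iff.1 hx)).symm
  rw [hα.2] at hsum2
  omega

lemma partition_support {α : ℕ →₀ ℕ} {n : ℕ} (hα : IsPartitionOf α n) :
    α.support ⊆ Finset.range n := by
  intro j hj
  rw [Finset.mem_range]
  by_contra h
  exact Finsupp.mem_support_iff.1 hj (partition_zero_of_ge hα (by omega))

lemma partition_all_one {α : ℕ →₀ ℕ} {N : ℕ} (hα : IsPartitionOf α (N + 1))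
    (h : 1 ≤ α N) : ∀ j ≤ N, α j = 1 := by
  have anti : ∀ a b : ℕ, a ≤ b → α b ≤ α a := fun a b hab =>
    antitone_nat_of_succ_le hα.1 hab
  have hge : ∀ a ∈ Finset.range (N + 1), 1 ≤ α a := fun a ha =>
    le_trans h (anti a N (Nat.lt_succ_iff.1 (Finset.mem_range.1 ha)))
  have hr : ∑ a ∈ Finset.range (N + 1), α a = ∑ a ∈ α.support, α a :=
    (Finset.sum_subset (partition_support hα)
      (fun x _ hx => Finsupp.notMem_support_iff.1 hx)).symm
  have hsum : ∑ a ∈ Finset.range (N + 1), α a = N + 1 := by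
    rw [hr, show (∑ a ∈ α.support, α a) = α.sum fun _ v => v from rfl, hα.2]
  intro j hj
  by_contra hne
  have hjm : j ∈ Finset.range (N + 1) := Finset.mem_range.2 (by omega)
  have h2 : 2 ≤ α j := by have := hge j hjm; omega
  have h3 : ∑ a ∈ (Finset.range (N + 1)).erase j, 1 ≤ ∑ a ∈ (Finset.range (N + 1)).erase j, α a :=
    Finset.sum_le_sum (fun a ha => hge a (Finset.mem_of_mem_erase ha))
  have h4 : α j + ∑ a ∈ (Finset.range (N + 1)).erase j, α a = ∑ a ∈ Finset.range (N + 1), α a :=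
    Finset.add_sum_erase _ _ hjm
  have h5 : ∑ _a ∈ (Finset.range (N + 1)).erase j, 1 = N := by
    rw [Finset.sum_const, smul_eq_mul, mul_one, Finset.card_erase_of_mem hjm,
      Finset.card_range]
    omega
  omega

lemma partsOf_sub_single {β : ℕ →₀ ℕ} {M : ℕ} (hM1 : β M = 1) :
    partsOf β = 1 ::ₘ partsOf (β - Finsupp.single M 1) := by
  have happ : ∀ j, j ≠ M → ((β - Finsupp.single M 1 : ℕ →₀ ℕ)) j = β j := by
    intro j hj
    rw [Finsupp.tsub_apply, Finsupp.single_apply, if_neg (fun hc => hj hc.symm)]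
    simp
  have hM' : ((β - Finsupp.single M 1 : ℕ →₀ ℕ)) M = 0 := by
    rw [Finsupp.tsub_apply, Finsupp.single_apply, if_pos rfl, hM1]
  have hMsupp : M ∈ β.support := Finsupp.mem_support_iff.2 (by omega)
  have hsupp : (β - Finsupp.single M 1).support = β.support.erase M := by
    ext j
    rw [Finsupp.mem_support_iff, Finset.mem_erase, Finsupp.mem_support_iff]
    by_cases hj : j = M
    · subst hj; rw [hM']; simp
    · rw [happ j hj]; simp [hj]
  unfold partsOf
  rw [hsupp, Finset.erase_val]
  have h1 : β.support.val = M ::ₘ β.support.val.erase M := (Multiset.cons_erase hMsupp).symm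
  have h2 : Multiset.map (⇑((β - Finsupp.single M 1 : ℕ →₀ ℕ))) (β.support.val.erase M)
      = Multiset.map (⇑β) (β.support.val.erase M) := by
    apply Multiset.map_congr rfl
    intro x hx
    apply happ
    exact ((Multiset.Nodup.mem_erase_iff β.support.nodup).1 hx).1
  calc Multiset.map (⇑β) β.support.val
      = Multiset.map (⇑β) (M ::ₘ β.support.val.erase M) := by rw [← h1]
    _ = β M ::ₘ Multiset.map (⇑β) (β.support.val.erase M) := Multiset.map_cons _ _ _
    _ = 1 ::ₘ Multiset.map (⇑((β - Finsupp.single M 1 : ℕ →₀ ℕ))) (β.support.val.erase M) := by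
        rw [hM1, h2]

lemma filter_parts {β : ℕ →₀ ℕ} {M : ℕ} (hM1 : β M = 1) :
    Multiset.filter (fun k => 2 ≤ k) (partsOf β)
      = Multiset.filter (fun k => 2 ≤ k) (partsOf (β - Finsupp.single M 1)) := by
  rw [partsOf_sub_single hM1, Multiset.filter_cons]
  simp

end Partition
/-- The branching theorem: if the last part of `β` is `1` (at position `M`, `0`-indexed),
then `ζ^α_β = ∑_{i : α_i > α_{i+1}} ζ^{α-ε_i}_{β-ε_m}`. -/
theorem stmt10 (N M L : ℕ) (α β : ℕ →₀ ℕ)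
    (hα : IsPartitionOf α (N + 1)) (hL : ∀ i, L ≤ i → α i = 0)
    (hβ : IsPartitionOf β (N + 1))
    (hM : ∀ j, M + 1 ≤ j → β j = 0) (hMone : β M = 1)
    (s : Equiv.Perm (Fin (N + 1))) (hs : HasCycleType s β)
    (τ : Equiv.Perm (Fin N)) (hτ : HasCycleType τ (β - Finsupp.single M 1)) :
    zeta (N + 1) α s =
      ∑ i ∈ Finset.range L,
        (if α (i + 1) < α i then zeta N (α - Finsupp.single i 1) τ else 0) := by
  have hA0 : ∀ j, N + 1 ≤ j → natToZ α j = 0 := by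
    intro j hj
    rw [natToZ_apply, partition_zero_of_ge hα hj]
    rfl
  have hcyc : s.cycleType = τ.cycleType := by
    rw [hs.2, hτ.2, filter_parts hMone]
  have hsupp : ∀ σ : Equiv.Perm (Fin (N + 1)),
      (natToZ α + shiftF (N + 1) σ).support ⊆ Finset.range (N + 1) := by
    intro σ j hj
    rw [Finset.mem_range]
    by_contra hc
    apply Finsupp.mem_support_iff.1 hj
    rw [Finsupp.add_apply, hA0 j (by omega), shiftF_apply, dif_neg (by omega)]
    simp
  have step1 : zeta (N + 1) α s
      = ∑ i ∈ Finset.range (N + 1), chi N (N + 1) (natToZ α - Finsupp.single i 1) τ := by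
    show chi (N + 1) (N + 1) (natToZ α) s = _
    rw [chi_def]
    have e1 : ∀ σ : Equiv.Perm (Fin (N + 1)),
        (Equiv.Perm.sign σ : ℤ) * xi (N + 1) (natToZ α + shiftF (N + 1) σ) s
          = ∑ i ∈ Finset.range (N + 1), (Equiv.Perm.sign σ : ℤ)
              * xi N ((natToZ α - Finsupp.single i 1) + shiftF (N + 1) σ) τ := by
      intro σ
      rw [xi_branch _ (hsupp σ) hcyc, Finset.mul_sum]
      apply Finset.sum_congr rfl
      intro i _
      congr 1
      rw [add_sub_right_comm]
    rw [Finset.sum_congr rfl (fun σ _ => e1 σ), Finset.sum_comm]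
    apply Finset.sum_congr rfl
    intro i _
    rw [chi_def]
  have step2 : ∀ i < N + 1, chi N (N + 1) (natToZ α - Finsupp.single i 1) τ
      = if α (i + 1) < α i then zeta N (α - Finsupp.single i 1) τ else 0 := by
    intro i hi
    by_cases hdesc : α (i + 1) < α i
    · rw [if_pos hdesc]
      have hi1 : 1 ≤ α i := by omega
      have hDN : ((natToZ α - Finsupp.single i 1 : ℕ →₀ ℤ)) N = 0 := by
        rw [sub_single_apply, natToZ_apply]
        by_cases hiN : i = N
        · subst hiN
          rw [if_pos rfl]
          have := partition_all_one hα hi1 i le_rfl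
          omega
        · rw [if_neg hiN]
          have hαN : α N = 0 := by
            by_contra h0
            have h1 := partition_all_one hα (by omega) i (by omega)
            have h2 := partition_all_one hα (by omega) (i + 1) (by omega)
            omega
          rw [hαN]
          simp
      rw [chi_stab N N _ τ hDN]
      show _ = chi N N (natToZ (α - Finsupp.single i 1)) τ
      rw [natToZ_sub α i hi1]
    · rw [if_neg hdesc]
      have heqa : α (i + 1) = α i := le_antisymm (hα.1 i) (not_lt.1 hdesc)
      by_cases hiN : i < N
      · apply chi_eq_zero_of_shiftEq N (N + 1) _ τ ⟨i, by omega⟩ ⟨i + 1, by omega⟩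
          (by intro hc; have := congrArg Fin.val hc; simp at this)
        show ((natToZ α - Finsupp.single i 1 : ℕ →₀ ℤ)) i - (i : ℤ)
          = ((natToZ α - Finsupp.single i 1 : ℕ →₀ ℤ)) (i + 1) - ((i + 1 : ℕ) : ℤ)
        rw [sub_single_apply, sub_single_apply, natToZ_apply, natToZ_apply, if_pos rfl,
          if_neg (by omega), heqa]
        push_cast
        ring
      · have hiN' : i = N := by omega
        subst hiN'
        have hαi : α i = 0 := by
          have h1 := partition_zero_of_ge hα (show i + 1 ≤ i + 1 by omega)
          omega
        apply chi_vanish_last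
        rw [sub_single_apply, if_pos rfl, natToZ_apply, hαi]
        norm_num
  rw [step1, Finset.sum_congr rfl (fun i hi => step2 i (Finset.mem_range.1 hi))]
  have hzero : ∀ j, N + 1 ≤ j ∨ L ≤ j →
      (if α (j + 1) < α j then zeta N (α - Finsupp.single j 1) τ else 0) = 0 := by
    intro j hj
    rw [if_neg]
    rcases hj with hj | hj
    · have h1 := partition_zero_of_ge hα (show N + 1 ≤ j by omega)
      have h2 := partition_zero_of_ge hα (show N + 1 ≤ j + 1 by omega)
      omega
    · have h1 := hL j hj
      have h2 := hL (j + 1) (by omega)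
      omega
  rw [Finset.sum_subset (Finset.range_subset_range.2 (le_max_left (N + 1) L))
    (fun j _ hj => hzero j (Or.inl (by rw [Finset.mem_range] at hj; omega)))]
  exact (Finset.sum_subset (Finset.range_subset_range.2 (le_max_right (N + 1) L))
    (fun j _ hj => hzero j (Or.inr (by rw [Finset.mem_range] at hj; omega)))).symm
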